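/- The second marginal of the discrete Wigner transform satisfies Σ_{r=0}^{2N-1} W̃(ψ,φ)(r,s) = (1/N) Σ_{j=0}^{N-1} conj(ψ̂_j) φ̂_j · δ^{(2N)}_{s, 2j} where ψ̂_j = Σ_{m=0}^{N-1} ψ_m exp(-2πi m j/N) and similarly for φ̂. -/

import Mathlib

open scoped BigOperators
open Complex

noncomputable section

instance nz2N (N : ℕ) [NeZero N] : NeZero (2 * N) :=
  ⟨Nat.mul_ne_zero two_ne_zero (NeZero.ne N)⟩
/-- The discrete Wigner transform `W̃(ψ,φ)(r,s)`. -/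
def Wt (N : ℕ) [NeZero N] (ψ φ : ZMod N → ℂ) (r s : ℤ) : ℂ :=
  (1 / (2 * N : ℂ)) * ∑ l : ZMod N,
    (starRingEnd ℂ) (ψ ((r : ZMod N) - l)) * φ l *
      Complex.exp (-(Real.pi : ℂ) * Complex.I * ((2 * (l.val : ℤ) - r : ℤ) : ℂ) * (s : ℂ) / (N : ℂ))

/-- The discrete Fourier coefficients `ψ̂_j = Σ_m ψ_m e^{-2πi m j/N}`. -/
def dft (N : ℕ) [NeZero N] (ψ : ZMod N → ℂ) (j : ZMod N) : ℂ :=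
  ∑ m : ZMod N, ψ m * Complex.exp (-2 * (Real.pi : ℂ) * Complex.I * (m.val : ℂ) * (j.val : ℂ) / (N : ℂ))

namespace WA

set_option linter.unusedSectionVars false

variable (N : ℕ) [NeZero N]

/-- `E N a = exp(π i a / N)`. -/
def E (a : ℤ) : ℂ := Complex.exp (Real.pi * Complex.I * a / N)

lemma E_arg {a b : ℤ} (h : a = b) : E N a = E N b := by rw [h]

lemma E_add (a b : ℤ) : E N (a + b) = E N a * E N b := by
  rw [E, E, E, ← Complex.exp_add]
  congr 1
  push_cast
  ring

lemma E_conj (a : ℤ) : (starRingEnd ℂ) (E N a) = E N (-a) := by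
  rw [E, E, ← Complex.exp_conj]
  congr 1
  simp only [map_div₀, map_mul, Complex.conj_I, Complex.conj_ofReal, map_intCast, map_natCast]
  push_cast
  ring

lemma E_two_N (k : ℤ) : E N (2 * N * k) = 1 := by
  have hN : (N : ℂ) ≠ 0 := Nat.cast_ne_zero.mpr (NeZero.ne N)
  rw [E]
  rw [show (Real.pi : ℂ) * Complex.I * ((2 * N * k : ℤ) : ℂ) / N = k * (2 * Real.pi * Complex.I) by
    push_cast; field_simp]
  exact Complex.exp_int_mul_two_pi_mul_I k

lemma E_congr {a b : ℤ} (h : (2 * N : ℤ) ∣ (b - a)) : E N a = E N b := by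
  obtain ⟨k, hk⟩ := h
  have hb : b = a + 2 * N * k := by push_cast at hk ⊢; linarith
  rw [hb, E_add, E_two_N, mul_one]

lemma E_zero : E N 0 = 1 := by simp [E]

lemma E_N : E N (N : ℤ) = -1 := by
  have hN : (N : ℂ) ≠ 0 := Nat.cast_ne_zero.mpr (NeZero.ne N)
  rw [E]
  rw [show (Real.pi : ℂ) * Complex.I * ((N : ℤ) : ℂ) / N = Real.pi * Complex.I by
    push_cast; field_simp]
  exact Complex.exp_pi_mul_I

lemma sum_range_natCast (f : ZMod N → ℂ) :
    ∑ m ∈ Finset.range N, f (m : ZMod N) = ∑ x : ZMod N, f x :=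
  Finset.sum_nbij' (fun m => (m : ZMod N)) (fun x => x.val)
    (fun _ _ => Finset.mem_univ _)
    (fun a _ => Finset.mem_range.mpr (ZMod.val_lt a))
    (fun a ha => ZMod.val_natCast_of_lt (Finset.mem_range.mp ha))
    (fun a _ => ZMod.natCast_zmod_val a)
    (fun _ _ => rfl)

lemma conj_dft (ψ : ZMod N → ℂ) (j : ZMod N) :
    (starRingEnd ℂ) (dft N ψ j) =
      ∑ m : ZMod N, (starRingEnd ℂ) (ψ m) * E N (2 * (m.val : ℤ) * (j.val : ℤ)) := by
  rw [dft, map_sum]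
  refine Finset.sum_congr rfl fun m _ => ?_
  rw [map_mul]
  congr 1
  rw [show Complex.exp (-2 * (Real.pi : ℂ) * Complex.I * (m.val : ℂ) * (j.val : ℂ) / N)
      = E N (-(2 * (m.val : ℤ) * (j.val : ℤ))) by rw [E]; congr 1; push_cast; ring]
  rw [E_conj, neg_neg]

lemma dft_E (φ : ZMod N → ℂ) (j : ZMod N) :
    dft N φ j = ∑ m : ZMod N, φ m * E N (-(2 * (m.val : ℤ) * (j.val : ℤ))) := by
  rw [dft]
  refine Finset.sum_congr rfl fun m _ => ?_
  congr 1
  rw [E]; congr 1; push_cast; ring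

/-- Exchanging the order of sums in the marginal. -/
lemma marginal_eq (ψ φ : ZMod N → ℂ) (s : ℕ) :
    ∑ r ∈ Finset.range (2 * N), Wt N ψ φ (r : ℤ) (s : ℤ) =
      (1 / (2 * N : ℂ)) * ∑ l : ZMod N, (φ l * E N (-(2 * (l.val : ℤ) * (s : ℤ)))) *
        ∑ r ∈ Finset.range (2 * N),
          (starRingEnd ℂ) (ψ ((((r : ℕ) : ℤ) : ZMod N) - l)) * E N ((r : ℤ) * (s : ℤ)) := by
  have h1 : ∀ r : ℕ, Wt N ψ φ (r : ℤ) (s : ℤ) =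
      (1 / (2 * N : ℂ)) * ∑ l : ZMod N, (φ l * E N (-(2 * (l.val : ℤ) * (s : ℤ)))) *
        ((starRingEnd ℂ) (ψ ((((r : ℕ) : ℤ) : ZMod N) - l)) * E N ((r : ℤ) * (s : ℤ))) := by
    intro r
    rw [Wt]
    congr 1
    refine Finset.sum_congr rfl fun l _ => ?_
    rw [show Complex.exp (-(Real.pi : ℂ) * Complex.I * ((2 * (l.val : ℤ) - (r : ℤ) : ℤ) : ℂ)
          * ((s : ℤ) : ℂ) / N)
        = E N (-(2 * (l.val : ℤ) * (s : ℤ))) * E N ((r : ℤ) * (s : ℤ)) by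
      rw [← E_add, E]; congr 1; push_cast; ring]
    ring
  calc ∑ r ∈ Finset.range (2 * N), Wt N ψ φ (r : ℤ) (s : ℤ)
      = (1 / (2 * N : ℂ)) * ∑ r ∈ Finset.range (2 * N), ∑ l : ZMod N,
          (φ l * E N (-(2 * (l.val : ℤ) * (s : ℤ)))) *
          ((starRingEnd ℂ) (ψ ((((r : ℕ) : ℤ) : ZMod N) - l)) * E N ((r : ℤ) * (s : ℤ))) := by
        rw [Finset.mul_sum]; exact Finset.sum_congr rfl fun r _ => h1 r
    _ = _ := by
        rw [Finset.sum_comm]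
        congr 1
        exact Finset.sum_congr rfl fun l _ => (Finset.mul_sum _ _ _).symm

/-- Splitting the `r`-sum over `range (2N)` into two copies of `range N`. -/
lemma rsum (ψ : ZMod N → ℂ) (l : ZMod N) (s : ℕ) :
    ∑ r ∈ Finset.range (2 * N),
        (starRingEnd ℂ) (ψ ((((r : ℕ) : ℤ) : ZMod N) - l)) * E N ((r : ℤ) * (s : ℤ)) =
      (1 + E N ((N : ℤ) * (s : ℤ))) * ∑ m ∈ Finset.range N,
        (starRingEnd ℂ) (ψ ((((m : ℕ) : ℤ) : ZMod N) - l)) * E N ((m : ℤ) * (s : ℤ)) := by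
  rw [two_mul, Finset.sum_range_add, add_mul, one_mul, Finset.mul_sum]
  congr 1
  refine Finset.sum_congr rfl fun m _ => ?_
  have hcast : (((N + m : ℕ) : ℤ) : ZMod N) = (((m : ℕ) : ℤ) : ZMod N) := by
    push_cast; simp
  rw [hcast]
  rw [show E N (((N + m : ℕ) : ℤ) * (s : ℤ)) = E N ((N : ℤ) * (s : ℤ)) * E N ((m : ℤ) * (s : ℤ)) by
    rw [← E_add]; exact E_arg N (by push_cast; ring)]
  ring

/-- The inner `m`-sum in the even case, in terms of the DFT. -/
lemma msum (ψ : ZMod N → ℂ) (l : ZMod N) (t : ℕ) (ht : t < N) :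
    ∑ m ∈ Finset.range N,
        (starRingEnd ℂ) (ψ ((((m : ℕ) : ℤ) : ZMod N) - l)) * E N ((m : ℤ) * ((2 * t : ℕ) : ℤ)) =
      E N (2 * (l.val : ℤ) * (t : ℤ)) * (starRingEnd ℂ) (dft N ψ (t : ZMod N)) := by
  have step1 : ∑ m ∈ Finset.range N,
      (starRingEnd ℂ) (ψ ((((m : ℕ) : ℤ) : ZMod N) - l)) * E N ((m : ℤ) * ((2 * t : ℕ) : ℤ)) =
      ∑ x : ZMod N, (starRingEnd ℂ) (ψ (x - l)) * E N (2 * (x.val : ℤ) * (t : ℤ)) := by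
    rw [← sum_range_natCast N (fun x => (starRingEnd ℂ) (ψ (x - l)) * E N (2 * (x.val : ℤ) * (t : ℤ)))]
    refine Finset.sum_congr rfl fun m hm => ?_
    have h1 : (((m : ℕ) : ℤ) : ZMod N) = ((m : ℕ) : ZMod N) := by push_cast; rfl
    have h2 : ((m : ZMod N)).val = m := ZMod.val_natCast_of_lt (Finset.mem_range.mp hm)
    rw [h1, h2]
    congr 1
    exact E_arg N (by push_cast; ring)
  rw [step1]
  have step2 : ∑ x : ZMod N, (starRingEnd ℂ) (ψ (x - l)) * E N (2 * (x.val : ℤ) * (t : ℤ)) =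
      ∑ n : ZMod N, (starRingEnd ℂ) (ψ n) * E N (2 * (((n + l).val : ℕ) : ℤ) * (t : ℤ)) := by
    refine (Fintype.sum_equiv (Equiv.addRight l)
      (fun n => (starRingEnd ℂ) (ψ n) * E N (2 * (((n + l).val : ℕ) : ℤ) * (t : ℤ)))
      (fun x => (starRingEnd ℂ) (ψ (x - l)) * E N (2 * (x.val : ℤ) * (t : ℤ))) ?_).symm
    intro n
    simp [Equiv.coe_addRight, add_sub_cancel_right]
  rw [step2]
  have step3 : ∀ n : ZMod N, E N (2 * (((n + l).val : ℕ) : ℤ) * (t : ℤ)) =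
      E N (2 * (n.val : ℤ) * (t : ℤ)) * E N (2 * (l.val : ℤ) * (t : ℤ)) := by
    intro n
    rw [← E_add]
    apply E_congr
    have hv : ((n + l).val : ℤ) = ((n.val : ℤ) + (l.val : ℤ))
        - (N : ℤ) * (((n.val + l.val) / N : ℕ) : ℤ) := by
      have hd := Nat.div_add_mod (n.val + l.val) N
      have hva := ZMod.val_add n l
      omega
    refine ⟨(((n.val + l.val) / N : ℕ) : ℤ) * (t : ℤ), ?_⟩
    rw [hv]
    ring
  calc ∑ n : ZMod N, (starRingEnd ℂ) (ψ n) * E N (2 * (((n + l).val : ℕ) : ℤ) * (t : ℤ))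
      = E N (2 * (l.val : ℤ) * (t : ℤ)) *
          ∑ n : ZMod N, (starRingEnd ℂ) (ψ n) * E N (2 * (n.val : ℤ) * (t : ℤ)) := by
        rw [Finset.mul_sum]
        refine Finset.sum_congr rfl fun n _ => ?_
        rw [step3 n]; ring
    _ = E N (2 * (l.val : ℤ) * (t : ℤ)) * (starRingEnd ℂ) (dft N ψ (t : ZMod N)) := by
        congr 1
        rw [conj_dft]
        refine Finset.sum_congr rfl fun n _ => ?_
        congr 1
        exact E_arg N (by rw [ZMod.val_natCast_of_lt ht])
  
/-- The delta condition on the RHS unfolds to a numeric equality. -/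
lemma cond_iff (s : ℕ) (hs : s < 2 * N) (j' : ZMod N) :
    ((s : ZMod (2 * N)) = 2 * ((j'.val : ℕ) : ZMod (2 * N))) ↔ s = 2 * j'.val := by
  have hj : j'.val < N := ZMod.val_lt j'
  rw [show (2 : ZMod (2 * N)) * ((j'.val : ℕ) : ZMod (2 * N))
      = ((2 * j'.val : ℕ) : ZMod (2 * N)) by push_cast; ring]
  rw [ZMod.natCast_eq_natCast_iff]
  unfold Nat.ModEq
  rw [Nat.mod_eq_of_lt hs, Nat.mod_eq_of_lt (by omega)]

end WA

open WA in
/-- the second marginal of the discrete Wigner transform. -/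
theorem wigner_second_marginal (N : ℕ) [NeZero N] (ψ φ : ZMod N → ℂ)
    (s : ℕ) (hs : s < 2 * N) :
    ∑ r ∈ Finset.range (2 * N), Wt N ψ φ (r : ℤ) (s : ℤ) =
      (1 / (N : ℂ)) * ∑ j : ZMod N, (starRingEnd ℂ) (dft N ψ j) * dft N φ j *
        (if (s : ZMod (2 * N)) = 2 * (j.val : ZMod (2 * N)) then 1 else 0) := by
  have hN : (N : ℂ) ≠ 0 := Nat.cast_ne_zero.mpr (NeZero.ne N)
  rw [marginal_eq]
  rcases Nat.even_or_odd s with hev | hodd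
  · -- even case
    obtain ⟨t, rfl⟩ : ∃ t, s = 2 * t := ⟨s / 2, by rw [Nat.even_iff] at hev; omega⟩
    have ht : t < N := by omega
    have hjval : ((t : ZMod N)).val = t := ZMod.val_natCast_of_lt ht
    -- LHS
    have hEN : E N ((N : ℤ) * ((2 * t : ℕ) : ℤ)) = 1 := by
      rw [← E_zero N]
      exact E_congr N ⟨-(t : ℤ), by push_cast; ring⟩
    have hL : (1 / (2 * (N : ℂ))) * ∑ l : ZMod N,
        (φ l * E N (-(2 * (l.val : ℤ) * ((2 * t : ℕ) : ℤ)))) *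
        ∑ r ∈ Finset.range (2 * N),
          (starRingEnd ℂ) (ψ ((((r : ℕ) : ℤ) : ZMod N) - l)) * E N ((r : ℤ) * ((2 * t : ℕ) : ℤ))
        = (1 / (N : ℂ)) * ((starRingEnd ℂ) (dft N ψ (t : ZMod N)) * dft N φ (t : ZMod N)) := by
      have hl : ∀ l : ZMod N,
          (φ l * E N (-(2 * (l.val : ℤ) * ((2 * t : ℕ) : ℤ)))) *
          ∑ r ∈ Finset.range (2 * N),
            (starRingEnd ℂ) (ψ ((((r : ℕ) : ℤ) : ZMod N) - l)) * E N ((r : ℤ) * ((2 * t : ℕ) : ℤ))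
          = 2 * (starRingEnd ℂ) (dft N ψ (t : ZMod N)) *
              (φ l * E N (-(2 * (l.val : ℤ) * (((t : ZMod N)).val : ℤ)))) := by
        intro l
        rw [rsum, hEN, msum N ψ l t ht]
        have hcomb : E N (-(2 * (l.val : ℤ) * ((2 * t : ℕ) : ℤ))) * E N (2 * (l.val : ℤ) * (t : ℤ))
            = E N (-(2 * (l.val : ℤ) * (((t : ZMod N)).val : ℤ))) := by
          rw [← E_add]
          exact E_arg N (by rw [hjval]; push_cast; ring)
        calc (φ l * E N (-(2 * (l.val : ℤ) * ((2 * t : ℕ) : ℤ)))) *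
            ((1 + 1) * (E N (2 * (l.val : ℤ) * (t : ℤ)) * (starRingEnd ℂ) (dft N ψ (t : ZMod N))))
            = 2 * (starRingEnd ℂ) (dft N ψ (t : ZMod N)) *
              (φ l * (E N (-(2 * (l.val : ℤ) * ((2 * t : ℕ) : ℤ))) *
                E N (2 * (l.val : ℤ) * (t : ℤ)))) := by ring
          _ = _ := by rw [hcomb]
      rw [Finset.sum_congr rfl fun l _ => hl l, ← Finset.mul_sum, ← dft_E]
      field_simp
    rw [hL]
    -- RHS
    have hcond : ∀ j' : ZMod N,
        (((2 * t : ℕ) : ZMod (2 * N)) = 2 * ((j'.val : ℕ) : ZMod (2 * N))) ↔ j' = (t : ZMod N) := by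
      intro j'
      rw [cond_iff N _ hs]
      constructor
      · intro h
        have hv : j'.val = t := by omega
        rw [← ZMod.natCast_zmod_val j', hv]
      · rintro rfl
        rw [hjval]
    have : ∑ j : ZMod N, (starRingEnd ℂ) (dft N ψ j) * dft N φ j *
        (if ((2 * t : ℕ) : ZMod (2 * N)) = 2 * ((j.val : ℕ) : ZMod (2 * N)) then (1:ℂ) else 0)
        = (starRingEnd ℂ) (dft N ψ (t : ZMod N)) * dft N φ (t : ZMod N) := by
      rw [Finset.sum_congr rfl fun j _ => by rw [if_congr (hcond j) rfl rfl]]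
      simp [mul_ite, mul_one, mul_zero]
    rw [this]
  · -- odd case
    obtain ⟨t, rfl⟩ : ∃ t, s = 2 * t + 1 := ⟨s / 2, by rw [Nat.odd_iff] at hodd; omega⟩
    have hEN : E N ((N : ℤ) * ((2 * t + 1 : ℕ) : ℤ)) = -1 := by
      rw [← E_N N]
      exact E_congr N ⟨-(t : ℤ), by push_cast; ring⟩
    have hL : ∀ l : ZMod N,
        (φ l * E N (-(2 * (l.val : ℤ) * ((2 * t + 1 : ℕ) : ℤ)))) *
        ∑ r ∈ Finset.range (2 * N),
          (starRingEnd ℂ) (ψ ((((r : ℕ) : ℤ) : ZMod N) - l)) *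
            E N ((r : ℤ) * ((2 * t + 1 : ℕ) : ℤ)) = 0 := by
      intro l
      rw [rsum, hEN]
      simp
    have hR : ∀ j' : ZMod N,
        ¬ (((2 * t + 1 : ℕ) : ZMod (2 * N)) = 2 * ((j'.val : ℕ) : ZMod (2 * N))) := by
      intro j' h
      rw [cond_iff N _ hs] at h
      omega
    have hL0 : ∑ l : ZMod N,
        (φ l * E N (-(2 * (l.val : ℤ) * ((2 * t + 1 : ℕ) : ℤ)))) *
        ∑ r ∈ Finset.range (2 * N),
          (starRingEnd ℂ) (ψ ((((r : ℕ) : ℤ) : ZMod N) - l)) *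
            E N ((r : ℤ) * ((2 * t + 1 : ℕ) : ℤ)) = 0 :=
      Finset.sum_eq_zero fun l _ => hL l
    have hR0 : ∑ j : ZMod N, (starRingEnd ℂ) (dft N ψ j) * dft N φ j *
        (if ((2 * t + 1 : ℕ) : ZMod (2 * N)) = 2 * ((j.val : ℕ) : ZMod (2 * N)) then (1:ℂ) else 0)
        = 0 :=
      Finset.sum_eq_zero fun j _ => by rw [if_neg (hR j), mul_zero]
    rw [hL0, hR0, mul_zero, mul_zero]
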